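/- Let μ < 1/4, T ≥ 1, and let θ₋ = (1 − √(1−4μ))/2. Suppose y : [T,∞) → ℝ is C², satisfies y''(t) + (μ/t²) y(t) ≥ 0 for all t > T, y has finite Dirichlet energy ∫_T^∞ |y'(t)|² dt < ∞, and let w(t) = y(T)(t/T)^{θ₋} − y(t). Then w(t) ≥ 0 for all t ≥ T, i.e., y(t) ≤ y(T)(t/T)^{θ₋}. -/

import Mathlib

open MeasureTheory Set

set_option maxHeartbeats 1600000 in
/-- Maximum principle for the singular Euler operator (homogeneous case): if
`y'' + (μ/t²) y ≥ 0` on `(T,∞)`, `μ < 1/4`, and `y` has finite Dirichlet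
energy, then `y(t) ≤ y(T)(t/T)^{θ₋}` for `t ≥ T`. -/
theorem euler_maximum_principle (μ T : ℝ) (hμ : μ < 1 / 4) (hT : 1 ≤ T)
    (θm : ℝ) (hθm : θm = (1 - Real.sqrt (1 - 4 * μ)) / 2)
    (y y' y'' : ℝ → ℝ)
    (hd1 : ∀ t ∈ Set.Ici T, HasDerivAt y (y' t) t)
    (hd2 : ∀ t ∈ Set.Ici T, HasDerivAt y' (y'' t) t)
    (hineq : ∀ t : ℝ, T < t → 0 ≤ y'' t + (μ / t ^ 2) * y t)
    (henergy : IntegrableOn (fun t => (y' t) ^ 2) (Set.Ioi T)) :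
    ∀ t : ℝ, T ≤ t → y t ≤ y T * (t / T) ^ θm := by
  have hT0 : (0:ℝ) < T := lt_of_lt_of_le one_pos hT
  have hpos : ∀ t : ℝ, T ≤ t → (0:ℝ) < t := fun t ht => lt_of_lt_of_le hT0 ht
  have hs0 : (0:ℝ) < 1 - 4*μ := by linarith
  have hsqrtpos : 0 < Real.sqrt (1 - 4*μ) := Real.sqrt_pos.mpr hs0
  have hsq : Real.sqrt (1 - 4*μ) ^ 2 = 1 - 4*μ := Real.sq_sqrt hs0.le
  have hθμ : θm * (θm - 1) = -μ := by rw [hθm]; nlinarith [hsq]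
  have hθhalf : θm < 1/2 := by
    rw [hθm]; linarith
  -- the function g = θ t^{θ-1} y - t^θ y'
  set g : ℝ → ℝ := fun t => θm * t ^ (θm - 1) * y t - t ^ θm * y' t with hgdef
  -- the function h = y t / t^θ
  set h : ℝ → ℝ := fun t => y t * t ^ (-θm) with hhdef
  have hcy : ContinuousOn y (Set.Ici T) :=
    fun t ht => (hd1 t ht).continuousAt.continuousWithinAt
  have hcy' : ContinuousOn y' (Set.Ici T) :=
    fun t ht => (hd2 t ht).continuousAt.continuousWithinAt
  have hrpowC : ∀ p : ℝ, ContinuousOn (fun t : ℝ => t ^ p) (Set.Ici T) := by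
    intro p t ht
    exact (Real.continuousAt_rpow_const t p (Or.inl (hpos t ht).ne')).continuousWithinAt
  have hcg : ContinuousOn g (Set.Ici T) := by
    apply ContinuousOn.sub
    · exact (continuousOn_const.mul (hrpowC _)).mul hcy
    · exact (hrpowC _).mul hcy'
  -- derivative of g
  have hgd : ∀ t ∈ Set.Ici T,
      HasDerivAt g (-(t ^ θm) * (y'' t + μ / t ^ 2 * y t)) t := by
    intro t ht
    have ht0 : (0:ℝ) < t := hpos t ht
    have d1 : HasDerivAt (fun u : ℝ => θm * u ^ (θm - 1) * y u)
        (θm * ((θm-1) * t ^ (θm - 1 - 1)) * y t + θm * t ^ (θm-1) * y' t) t := by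
      exact (((Real.hasDerivAt_rpow_const (p := θm - 1)
        (Or.inl ht0.ne')).const_mul θm).mul (hd1 t ht))
    have d2 : HasDerivAt (fun u : ℝ => u ^ θm * y' u)
        (θm * t ^ (θm - 1) * y' t + t ^ θm * y'' t) t :=
      (Real.hasDerivAt_rpow_const (p := θm) (Or.inl ht0.ne')).mul (hd2 t ht)
    have := d1.sub d2
    refine this.congr_deriv ?_
    symm
    have h2 : (t:ℝ) ^ 2 ≠ 0 := pow_ne_zero 2 ht0.ne'
    have key : t ^ (θm - 1 - 1) = t ^ θm / t ^ 2 := by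
      rw [eq_div_iff h2, ← Real.rpow_natCast t 2, ← Real.rpow_add ht0]
      congr 1; push_cast; ring
    rw [key]
    field_simp
    linear_combination (-(t ^ θm * y t)) * hθμ
  have hganti : AntitoneOn g (Set.Ici T) := by
    apply antitoneOn_of_deriv_nonpos (convex_Ici T) hcg
    · intro t ht
      rw [interior_Ici] at ht
      exact ((hgd t (mem_Ici.mpr (le_of_lt ht))).differentiableAt).differentiableWithinAt
    · intro t ht
      rw [interior_Ici] at ht
      rw [(hgd t (mem_Ici.mpr (le_of_lt ht))).deriv]
      have h1 : (0:ℝ) ≤ t ^ θm := (Real.rpow_pos_of_pos (hpos t ht.le) θm).le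
      have h2 := hineq t ht
      nlinarith
  -- derivative of h
  have hhd : ∀ t ∈ Set.Ici T,
      HasDerivAt h (t ^ (-(2*θm)) * (-(g t))) t := by
    intro t ht
    have ht0 : (0:ℝ) < t := hpos t ht
    have d1 : HasDerivAt (fun u : ℝ => y u * u ^ (-θm))
        (y' t * t ^ (-θm) + y t * (-θm * t ^ (-θm - 1))) t :=
      (hd1 t ht).mul (Real.hasDerivAt_rpow_const (p := -θm) (Or.inl ht0.ne'))
    convert d1 using 1
    have e1 : t ^ (-(2*θm)) * t ^ θm = t ^ (-θm) := by
      rw [← Real.rpow_add ht0]; ring_nf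
    have e2 : t ^ (-(2*θm)) * t ^ (θm - 1) = t ^ (-θm - 1) := by
      rw [← Real.rpow_add ht0]; ring_nf
    rw [hgdef]
    simp only
    linear_combination y' t * e1 - θm * y t * e2
  have hch : ContinuousOn h (Set.Ici T) := hcy.mul (hrpowC _)
  have hyh : ∀ t : ℝ, T ≤ t → y t = h t * t ^ θm := by
    intro t ht
    have ht0 := hpos t ht
    rw [hhdef]
    simp only
    rw [mul_assoc, ← Real.rpow_add ht0]
    simp
  by_cases hcase : ∀ t : ℝ, T < t → 0 ≤ g t
  · -- maximum principle case : h is antitone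
    have hanti : AntitoneOn h (Set.Ici T) := by
      apply antitoneOn_of_deriv_nonpos (convex_Ici T) hch
      · intro t ht
        rw [interior_Ici] at ht
        exact ((hhd t (mem_Ici.mpr (le_of_lt ht))).differentiableAt).differentiableWithinAt
      · intro t ht
        rw [interior_Ici] at ht
        rw [(hhd t (mem_Ici.mpr (le_of_lt ht))).deriv]
        have h1 : (0:ℝ) ≤ t ^ (-(2*θm)) := (Real.rpow_pos_of_pos (hpos t ht.le) _).le
        have h2 := hcase t ht
        nlinarith
    intro t ht
    have key : h t ≤ h T := hanti self_mem_Ici ht ht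
    have ht0 := hpos t ht
    calc y t = h t * t ^ θm := hyh t ht
      _ ≤ h T * t ^ θm := by
          have := Real.rpow_pos_of_pos ht0 θm
          nlinarith
      _ = y T * (t / T) ^ θm := by
          rw [hhdef]
          simp only
          rw [Real.div_rpow ht0.le hT0.le, Real.rpow_neg hT0.le, div_eq_mul_inv]
          ring
  · -- energy case : contradiction
    push_neg at hcase
    obtain ⟨s, hsT, hgs⟩ := hcase
    exfalso
    set E : ℝ := ∫ u in Set.Ioi T, (y' u) ^ 2 with hE
    have hE0 : 0 ≤ E := by
      apply setIntegral_nonneg measurableSet_Ioi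
      intro u _; positivity
    -- upper bound from finite energy
    have hub : ∀ t : ℝ, T ≤ t → y t ≤ y T + (1 + E)/2 * t ^ ((1:ℝ)/2) := by
      intro t ht
      have ht0 := hpos t ht
      have huicc : Set.uIcc T t ⊆ Set.Ici T := by
        rw [Set.uIcc_of_le ht]; exact Set.Icc_subset_Ici_self
      have hyint : IntervalIntegrable y' volume T t :=
        (hcy'.mono huicc).intervalIntegrable
      have hftc : ∫ u in T..t, y' u = y t - y T :=
        intervalIntegral.integral_eq_sub_of_hasDerivAt (fun u hu => hd1 u (huicc hu)) hyint
      have hsqint : IntervalIntegrable (fun u => (y' u)^2) volume T t :=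
        ((hcy'.mono huicc).pow 2).intervalIntegrable
      set p : ℝ := t ^ ((1:ℝ)/2) with hpdef
      have hp : (0:ℝ) < p := Real.rpow_pos_of_pos ht0 _
      have hbound : ∀ u : ℝ, y' u ≤ p⁻¹ / 2 + p / 2 * (y' u)^2 := by
        intro u
        have h1 : p * p⁻¹ = 1 := mul_inv_cancel₀ hp.ne'
        nlinarith [sq_nonneg (p * y' u - 1), hp, sq_nonneg (y' u)]
      have hmono : ∫ u in T..t, y' u ≤ ∫ u in T..t, (p⁻¹ / 2 + p / 2 * (y' u)^2) := by
        apply intervalIntegral.integral_mono_on ht hyint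
        · exact intervalIntegrable_const.add (hsqint.const_mul _)
        · intro u _; exact hbound u
      have hsplit : ∫ u in T..t, (p⁻¹ / 2 + p / 2 * (y' u)^2)
          = (t - T) * (p⁻¹ / 2) + p / 2 * ∫ u in T..t, (y' u)^2 := by
        rw [intervalIntegral.integral_add intervalIntegrable_const (hsqint.const_mul _),
          intervalIntegral.integral_const, intervalIntegral.integral_const_mul]
        simp [smul_eq_mul, mul_comm]
      have hEbound : ∫ u in T..t, (y' u)^2 ≤ E := by
        rw [intervalIntegral.integral_of_le ht]
        apply setIntegral_mono_set henergy
        · exact Filter.Eventually.of_forall fun u => sq_nonneg _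
        · exact Set.Ioc_subset_Ioi_self.eventuallyLE
      have hpp : p * p = t := by
        rw [hpdef, ← Real.rpow_add ht0]; norm_num
      have htp : t * p⁻¹ = p := by
        rw [← hpp, mul_inv_cancel_right₀ hp.ne']
      have h2 : (t - T) * (p⁻¹ / 2) ≤ p / 2 := by
        have hpi : (0:ℝ) < p⁻¹ := inv_pos.mpr hp
        nlinarith [htp, hT0]
      have h3 : p / 2 * ∫ u in T..t, (y' u)^2 ≤ p / 2 * E :=
        mul_le_mul_of_nonneg_left hEbound (by positivity)
      have h4 : (1 + E)/2 * p = p/2 + p/2 * E := by ring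
      linarith [hftc, hmono, hsplit, h2, h3, h4]
    -- lower bound from g s < 0
    set A : ℝ := (-(g s)) / (1 - 2*θm) with hA
    have hApos : 0 < A := by
      apply div_pos (by linarith) (by linarith)
    set C1 : ℝ := h s - A * s ^ (1 - 2*θm) with hC1
    have hlb : ∀ t : ℝ, s ≤ t → C1 * t ^ θm + A * t ^ (1-θm) ≤ y t := by
      intro t hst
      have hTt : T ≤ t := le_trans hsT.le hst
      have ht0 := hpos t hTt
      have huicc : Set.uIcc s t ⊆ Set.Ici T := by
        rw [Set.uIcc_of_le hst]
        exact fun u hu => le_trans hsT.le hu.1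
      have hHint : IntervalIntegrable (fun u : ℝ => u ^ (-(2*θm)) * (-(g u))) volume s t :=
        (((hrpowC (-(2*θm))).mono huicc).mul ((hcg.mono huicc).neg)).intervalIntegrable
      have hftc2 : ∫ u in s..t, (u ^ (-(2*θm)) * (-(g u))) = h t - h s :=
        intervalIntegral.integral_eq_sub_of_hasDerivAt (fun u hu => hhd u (huicc hu)) hHint
      have hlint : IntervalIntegrable (fun u : ℝ => (-(g s)) * u ^ (-(2*θm))) volume s t :=
        (continuousOn_const.mul ((hrpowC (-(2*θm))).mono huicc)).intervalIntegrable
      have hmono2 : ∫ u in s..t, (-(g s)) * u ^ (-(2*θm))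
          ≤ ∫ u in s..t, (u ^ (-(2*θm)) * (-(g u))) := by
        apply intervalIntegral.integral_mono_on hst hlint hHint
        intro u hu
        have huT : u ∈ Set.Ici T := le_trans hsT.le hu.1
        have hgu : g u ≤ g s := hganti (Set.mem_Ici.mpr hsT.le) huT hu.1
        have hru : (0:ℝ) < u ^ (-(2*θm)) := Real.rpow_pos_of_pos (hpos u huT) _
        rw [mul_comm]
        exact mul_le_mul_of_nonneg_left (by linarith) hru.le
      have hcalc : ∫ u in s..t, (-(g s)) * u ^ (-(2*θm))
          = (-(g s)) * ((t ^ (1 - 2*θm) - s ^ (1 - 2*θm)) / (1 - 2*θm)) := by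
        rw [intervalIntegral.integral_const_mul, integral_rpow (Or.inl (by linarith))]
        have e : -(2*θm) + 1 = 1 - 2*θm := by ring
        rw [e]
      have hAeq : (-(g s)) * ((t ^ (1 - 2*θm) - s ^ (1 - 2*θm)) / (1 - 2*θm))
          = A * t ^ (1 - 2*θm) - A * s ^ (1 - 2*θm) := by
        rw [hA]; field_simp; ring
      have hht : C1 + A * t ^ (1 - 2*θm) ≤ h t := by
        rw [hC1]; linarith [hftc2, hmono2, hcalc, hAeq]
      have htθ : (0:ℝ) < t ^ θm := Real.rpow_pos_of_pos ht0 _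
      have hexp : t ^ (1 - 2*θm) * t ^ θm = t ^ (1 - θm) := by
        rw [← Real.rpow_add ht0]; congr 1; ring
      calc C1 * t ^ θm + A * t ^ (1-θm) = (C1 + A * t ^ (1 - 2*θm)) * t ^ θm := by
            rw [← hexp]; ring
        _ ≤ h t * t ^ θm := mul_le_mul_of_nonneg_right hht htθ.le
        _ = y t := (hyh t hTt).symm
    -- contradiction by letting t → ∞
    have l1 : Filter.Tendsto (fun t : ℝ => t ^ (1 - θm)) Filter.atTop Filter.atTop :=
      tendsto_rpow_atTop (by linarith)
    have l2 : Filter.Tendsto (fun t : ℝ => A + C1 * t ^ (θm - (1-θm))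
        - y T * t ^ (-(1-θm)) - (1+E)/2 * t ^ ((1:ℝ)/2 - (1-θm)))
        Filter.atTop (nhds A) := by
      have a1 : Filter.Tendsto (fun t : ℝ => t ^ (θm - (1-θm))) Filter.atTop (nhds 0) := by
        have : θm - (1-θm) = -(1 - 2*θm) := by ring
        rw [this]
        exact tendsto_rpow_neg_atTop (by linarith)
      have a2 : Filter.Tendsto (fun t : ℝ => t ^ (-(1-θm))) Filter.atTop (nhds 0) :=
        tendsto_rpow_neg_atTop (by linarith)
      have a3 : Filter.Tendsto (fun t : ℝ => t ^ ((1:ℝ)/2 - (1-θm))) Filter.atTop (nhds 0) := by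
        have : (1:ℝ)/2 - (1-θm) = -(1/2 - θm) := by ring
        rw [this]
        exact tendsto_rpow_neg_atTop (by linarith)
      have key : Filter.Tendsto (fun t : ℝ => A + C1 * t ^ (θm - (1-θm))
          - y T * t ^ (-(1-θm)) - (1+E)/2 * t ^ ((1:ℝ)/2 - (1-θm)))
          Filter.atTop (nhds (A + C1 * 0 - y T * 0 - (1+E)/2 * 0)) :=
        ((tendsto_const_nhds.add (a1.const_mul C1)).sub (a2.const_mul (y T))).sub
          (a3.const_mul ((1+E)/2))
      simpa using key
    have heq : ∀ t : ℝ, 0 < t → t ^ (1-θm) * (A + C1 * t ^ (θm - (1-θm))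
        - y T * t ^ (-(1-θm)) - (1+E)/2 * t ^ ((1:ℝ)/2 - (1-θm)))
        = C1 * t ^ θm + A * t ^ (1-θm) - (y T + (1+E)/2 * t ^ ((1:ℝ)/2)) := by
      intro t ht0
      have e1 : t ^ (1-θm) * t ^ (θm - (1-θm)) = t ^ θm := by
        rw [← Real.rpow_add ht0]; congr 1; ring
      have e2 : t ^ (1-θm) * t ^ (-(1-θm)) = 1 := by
        rw [← Real.rpow_add ht0, add_neg_cancel, Real.rpow_zero]
      have e3 : t ^ (1-θm) * t ^ ((1:ℝ)/2 - (1-θm)) = t ^ ((1:ℝ)/2) := by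
        rw [← Real.rpow_add ht0]; congr 1; ring
      linear_combination C1 * e1 - y T * e2 - (1+E)/2 * e3
    have hFtop : Filter.Tendsto (fun t : ℝ => C1 * t ^ θm + A * t ^ (1-θm)
        - (y T + (1+E)/2 * t ^ ((1:ℝ)/2))) Filter.atTop Filter.atTop := by
      apply Filter.Tendsto.congr' _ (Filter.Tendsto.atTop_mul_pos hApos l1 l2)
      filter_upwards [Filter.eventually_gt_atTop (0:ℝ)] with t ht0
      exact heq t ht0
    obtain ⟨t, hst, hFt⟩ : ∃ t : ℝ, s ≤ t ∧ 0 < C1 * t ^ θm + A * t ^ (1-θm)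
        - (y T + (1+E)/2 * t ^ ((1:ℝ)/2)) := by
      rcases ((Filter.eventually_ge_atTop s).and
        (hFtop.eventually_gt_atTop 0)).exists with ⟨t, h1, h2⟩
      exact ⟨t, h1, h2⟩
    have h5 := hlb t hst
    have h6 := hub t (le_trans hsT.le hst)
    clear hlb hub heq hFtop l1 l2 hganti hgd hhd hineq hd1 hd2 henergy hcg hch hcy hcy' hrpowC hyh
    clear_value A C1 E g h

    linarith [h5, h6, hFt]
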